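/- Fix γ > 0. For k ≥ 1 let ψ^(k)(z) = ((1+z)/2)·exp(γ(z−1)/(1+z+1/k)), analytic on a neighborhood of the closed unit disk, and let ψ^∞ have boundary values ψ^∞(e^{−iλ}) = ((1+e^{−iλ})/2)·exp(−iγ·tan(λ/2)) for λ ∈ (−π, π). Then the retailer's inventory variance is continuous along the sequence: lim_{k→∞} (1/2π)∫_{−π}^{π} |(e^{−iλ}ψ^(k)(e^{−iλ}) − 1)/(1 − e^{−iλ})|² dλ = (1/2π)∫_{−π}^{π} |(e^{−iλ}ψ^∞(e^{−iλ}) − 1)/(1 − e^{−iλ})|² dλ, i.e., lim_{k→∞} σ_I²(ψ^(k)) = σ_I²(ψ^∞), and both quantities are finite. -/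

import Mathlib

open MeasureTheory intervalIntegral

/-- The ε-optimal policy `ψ^(k)(z) = ((1+z)/2)·exp(γ(z−1)/(1+z+1/k))`. -/
noncomputable def psiK (γ : ℝ) (k : ℕ) : ℂ → ℂ :=
  fun z => ((1 + z) / 2) * Complex.exp ((γ : ℂ) * (z - 1) / (1 + z + 1 / (k : ℂ)))

/-- Boundary values of the limiting policy `ψ^∞`. -/
noncomputable def psiInfBdy (γ : ℝ) : ℝ → ℂ := fun l =>
  ((1 + Complex.exp (-Complex.I * l)) / 2) *
    Complex.exp (-Complex.I * (γ : ℂ) * (Real.tan (l / 2) : ℂ))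

/-- The inventory-variance integrand of a circle function `F`. -/
noncomputable def invIntegrand (F : ℝ → ℂ) : ℝ → ℝ := fun l =>
  ‖(Complex.exp (-Complex.I * l) * F l - 1) / (1 - Complex.exp (-Complex.I * l))‖ ^ 2

/-- Inventory variance of a function on the unit circle. -/
noncomputable def sigmaI2c (F : ℝ → ℂ) : ℝ :=
  (1 / (2 * Real.pi)) * ∫ l in (-Real.pi)..Real.pi, invIntegrand F l

/- ### Auxiliary lemmas -/

lemma expA {w : ℂ} (hw : w.re ≤ 0) : ‖Complex.exp w - 1‖ ≤ 2 * ‖w‖ := by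
  rcases le_or_gt ‖w‖ 1 with h | h
  · exact Complex.norm_exp_sub_one_le h
  · calc ‖Complex.exp w - 1‖ ≤ ‖Complex.exp w‖ + ‖(1:ℂ)‖ := norm_sub_le _ _
    _ ≤ 1 + 1 := by
        rw [Complex.norm_exp, norm_one]
        gcongr
        exact Real.exp_le_one_iff.2 hw
    _ ≤ 2 * ‖w‖ := by nlinarith

lemma eq_of_sq {a b : ℝ} (ha : 0 ≤ a) (hb : 0 ≤ b) (h : a^2 = b^2) : a = b := by
  calc a = Real.sqrt (a^2) := (Real.sqrt_sq ha).symm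
  _ = Real.sqrt (b^2) := by rw [h]
  _ = b := Real.sqrt_sq hb

lemma zcoord (l : ℝ) : Complex.exp (-Complex.I * l) = (Real.cos l : ℂ) - (Real.sin l : ℂ) * Complex.I := by
  have h : -Complex.I * l = ((-l : ℝ) : ℂ) * Complex.I := by push_cast; ring
  rw [h, Complex.exp_mul_I]
  push_cast [Complex.ofReal_cos, Complex.ofReal_sin, Complex.cos_neg, Complex.sin_neg]
  ring

lemma norm_one_sub_z (l : ℝ) : ‖1 - Complex.exp (-Complex.I * l)‖ = 2 * |Real.sin (l/2)| := by
  apply eq_of_sq (norm_nonneg _) (by positivity)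
  rw [zcoord, Complex.sq_norm, Complex.normSq_apply]
  have h1 : Real.sin (l/2)^2 = 1/2 - Real.cos l/2 := by
    have := Real.sin_sq_eq_half_sub (l/2); rw [show 2*(l/2) = l by ring] at this; linarith
  have h2 := Real.sin_sq_add_cos_sq l
  have h3 : |Real.sin (l/2)|^2 = Real.sin (l/2)^2 := sq_abs _
  simp only [Complex.sub_re, Complex.sub_im, Complex.one_re, Complex.one_im,
    Complex.ofReal_re, Complex.ofReal_im, Complex.mul_re, Complex.mul_im,
    Complex.I_re, Complex.I_im]
  nlinarith [h1, h2, h3]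

lemma norm_one_add_z (l : ℝ) : ‖1 + Complex.exp (-Complex.I * l)‖ = 2 * |Real.cos (l/2)| := by
  apply eq_of_sq (norm_nonneg _) (by positivity)
  rw [zcoord, Complex.sq_norm, Complex.normSq_apply]
  have h1 : Real.cos (l/2)^2 = 1/2 + Real.cos l/2 := by
    have := Real.cos_sq (l/2); rw [show 2*(l/2) = l by ring] at this; linarith
  have h2 := Real.sin_sq_add_cos_sq l
  have h3 : |Real.cos (l/2)|^2 = Real.cos (l/2)^2 := sq_abs _
  simp only [Complex.add_re, Complex.add_im, Complex.one_re, Complex.one_im,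
    Complex.ofReal_re, Complex.ofReal_im, Complex.mul_re, Complex.mul_im,
    Complex.I_re, Complex.I_im, Complex.sub_re, Complex.sub_im]
  nlinarith [h1, h2, h3]

lemma psiK_sub_one (γ : ℝ) (hγ : 0 ≤ γ) (k : ℕ) (hk : 1 ≤ k) (l : ℝ) :
    ‖psiK γ k (Complex.exp (-Complex.I * l)) - 1‖
      ≤ (γ + 1/2) * ‖Complex.exp (-Complex.I * l) - 1‖ := by
  set z := Complex.exp (-Complex.I * l) with hzdef
  set c := Real.cos l
  set s := Real.sin l
  have zc : z = (c : ℂ) - (s : ℂ) * Complex.I := zcoord l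
  set r : ℝ := 1 / (k : ℝ) with hrdef
  have hr : 0 < r := by positivity
  have hc1 : c ≤ 1 := Real.cos_le_one l
  have hc2 : -1 ≤ c := Real.neg_one_le_cos l
  have hcs : s^2 + c^2 = 1 := Real.sin_sq_add_cos_sq l
  set d : ℂ := 1 + z + 1 / (k : ℂ) with hddef
  have hd : d = ((1 + c + r : ℝ) : ℂ) + ((-s : ℝ) : ℂ) * Complex.I := by
    rw [hddef, zc, hrdef]; push_cast; ring
  have hdre : d.re = 1 + c + r := by
    simp [hd, Complex.add_re, Complex.ofReal_re, Complex.mul_re]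
  have hdim : d.im = -s := by
    simp [hd]
  have hdne : d ≠ 0 := by
    intro h0
    rw [h0] at hdre
    simp at hdre
    nlinarith
  set w : ℂ := (γ : ℂ) * (z - 1) / d with hwdef
  have hnum : (γ : ℂ) * (z - 1) = ((γ * (c - 1) : ℝ) : ℂ) + ((γ * (-s) : ℝ) : ℂ) * Complex.I := by
    rw [zc]; push_cast; ring
  have hre : w.re ≤ 0 := by
    rw [hwdef, Complex.div_re, hdre, hdim]
    have h1 : ((γ : ℂ) * (z - 1)).re = γ * (c - 1) := by simp [hnum]
    have h2 : ((γ : ℂ) * (z - 1)).im = γ * (-s) := by simp [hnum]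
    rw [h1, h2, ← add_div]
    apply div_nonpos_of_nonpos_of_nonneg _ (Complex.normSq_nonneg d)
    have key : γ * r * (c - 1) ≤ 0 :=
      mul_nonpos_of_nonneg_of_nonpos (mul_nonneg hγ hr.le) (by linarith)
    have heq : γ * (c - 1) * (1 + c + r) + γ * -s * -s = γ * r * (c - 1) := by
      linear_combination γ * hcs
    rw [heq]; exact key
  have habs : ‖(1 : ℂ) + z‖ ≤ ‖d‖ := by
    rw [Complex.norm_def, Complex.norm_def]
    apply Real.sqrt_le_sqrt
    have h1z : (1 : ℂ) + z = ((1 + c : ℝ) : ℂ) + ((-s : ℝ) : ℂ) * Complex.I := by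
      rw [zc]; push_cast; ring
    rw [h1z, hd]
    simp only [Complex.normSq_apply, Complex.add_re, Complex.add_im, Complex.ofReal_re,
      Complex.ofReal_im, Complex.mul_re, Complex.mul_im, Complex.I_re, Complex.I_im]
    nlinarith
  have hdpos : 0 < ‖d‖ := norm_pos_iff.2 hdne
  have hw_norm : ‖w‖ = γ * ‖z - 1‖ / ‖d‖ := by
    rw [hwdef]
    rw [norm_div, norm_mul, Complex.norm_real, Real.norm_eq_abs, _root_.abs_of_nonneg hγ]
  have hsplit : psiK γ k z - 1 = ((1 + z) / 2) * (Complex.exp w - 1) + (z - 1) / 2 := by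
    rw [psiK, hwdef, hddef]; ring
  rw [hsplit]
  calc ‖((1 + z) / 2) * (Complex.exp w - 1) + (z - 1) / 2‖
      ≤ ‖((1 + z) / 2) * (Complex.exp w - 1)‖ + ‖(z - 1) / 2‖ := norm_add_le _ _
    _ = ‖(1 : ℂ) + z‖ / 2 * ‖Complex.exp w - 1‖ + ‖z - 1‖ / 2 := by
        rw [norm_mul, norm_div, norm_div]; norm_num
    _ ≤ ‖(1 : ℂ) + z‖ / 2 * (2 * ‖w‖) + ‖z - 1‖ / 2 := by
        gcongr
        exact expA hre
    _ = (‖(1 : ℂ) + z‖ / ‖d‖) * (γ * ‖z - 1‖) + ‖z - 1‖ / 2 := by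
        rw [hw_norm]; field_simp
    _ ≤ 1 * (γ * ‖z - 1‖) + ‖z - 1‖ / 2 := by
        apply add_le_add_left
        exact mul_le_mul_of_nonneg_right ((div_le_one hdpos).2 habs) (by positivity)
    _ = (γ + 1/2) * ‖z - 1‖ := by ring

lemma psiInf_sub_one (γ : ℝ) (hγ : 0 ≤ γ) (l : ℝ) :
    ‖psiInfBdy γ l - 1‖ ≤ (γ + 1/2) * ‖Complex.exp (-Complex.I * l) - 1‖ := by
  set z := Complex.exp (-Complex.I * l) with hzdef
  set w : ℂ := -Complex.I * (γ : ℂ) * (Real.tan (l / 2) : ℂ) with hwdef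
  have hre : w.re = 0 := by
    rw [hwdef]
    simp only [Complex.mul_re, Complex.mul_im, Complex.neg_re, Complex.neg_im,
      Complex.I_re, Complex.I_im, Complex.ofReal_re, Complex.ofReal_im]
    ring
  have hw_norm : ‖w‖ = γ * |Real.tan (l/2)| := by
    rw [hwdef, norm_mul, norm_mul, norm_neg, Complex.norm_I, Complex.norm_real,
      Complex.norm_real, Real.norm_eq_abs, Real.norm_eq_abs, _root_.abs_of_nonneg hγ]
    ring
  have hsplit : psiInfBdy γ l - 1 = ((1 + z) / 2) * (Complex.exp w - 1) + (z - 1) / 2 := by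
    rw [psiInfBdy]; ring
  have hkey : |Real.cos (l/2)| * |Real.tan (l/2)| ≤ |Real.sin (l/2)| := by
    rw [Real.tan_eq_sin_div_cos, abs_div]
    rcases eq_or_ne (Real.cos (l/2)) 0 with h0 | h0
    · rw [h0]; simp
    · rw [mul_div_assoc']
      rw [mul_comm, mul_div_assoc, div_self (abs_ne_zero.2 h0), mul_one]
  have hzs : ‖z - 1‖ = 2 * |Real.sin (l/2)| := by
    rw [← norm_neg, neg_sub, hzdef, norm_one_sub_z]
  rw [hsplit]
  calc ‖((1 + z) / 2) * (Complex.exp w - 1) + (z - 1) / 2‖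
      ≤ ‖((1 + z) / 2) * (Complex.exp w - 1)‖ + ‖(z - 1) / 2‖ := norm_add_le _ _
    _ = ‖(1 : ℂ) + z‖ / 2 * ‖Complex.exp w - 1‖ + ‖z - 1‖ / 2 := by
        rw [norm_mul, norm_div, norm_div]; norm_num
    _ ≤ ‖(1 : ℂ) + z‖ / 2 * (2 * ‖w‖) + ‖z - 1‖ / 2 :=
        add_le_add_left (mul_le_mul_of_nonneg_left (expA (le_of_eq hre)) (by positivity)) _
    _ = 2 * γ * (|Real.cos (l/2)| * |Real.tan (l/2)|) + ‖z - 1‖ / 2 := by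
        rw [hw_norm, hzdef, norm_one_add_z]; ring
    _ ≤ 2 * γ * |Real.sin (l/2)| + ‖z - 1‖ / 2 := by
        gcongr
    _ = γ * ‖z - 1‖ + ‖z - 1‖ / 2 := by rw [hzs]; ring
    _ = (γ + 1/2) * ‖z - 1‖ := by ring

lemma quot_bound (γ : ℝ) (hγ : 0 ≤ γ) (z ψ : ℂ) (hz : ‖z‖ = 1)
    (h : ‖ψ - 1‖ ≤ (γ + 1/2) * ‖z - 1‖) : ‖(z * ψ - 1) / (1 - z)‖ ≤ γ + 3/2 := by
  by_cases h1 : z = 1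
  · subst h1
    have : ψ = 1 := by
      have h0 : ‖ψ - 1‖ ≤ 0 := by simpa using h
      have h0' := norm_nonneg (ψ - 1)
      have : ‖ψ - 1‖ = 0 := le_antisymm h0 h0'
      rwa [norm_eq_zero, sub_eq_zero] at this
    subst this
    norm_num
    linarith
  · have hne : (1 : ℂ) - z ≠ 0 := fun h0 => h1 (by linear_combination -h0)
    rw [norm_div, div_le_iff₀ (norm_pos_iff.2 hne)]
    have hrw : z * ψ - 1 = z * (ψ - 1) + (z - 1) := by ring
    rw [hrw]
    calc ‖z * (ψ - 1) + (z - 1)‖ ≤ ‖z * (ψ - 1)‖ + ‖z - 1‖ := norm_add_le _ _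
      _ = ‖ψ - 1‖ + ‖z - 1‖ := by rw [norm_mul, hz, one_mul]
      _ ≤ (γ + 1/2) * ‖z - 1‖ + ‖z - 1‖ := by linarith
      _ = (γ + 3/2) * ‖1 - z‖ := by rw [norm_sub_rev]; ring

lemma z_norm (l : ℝ) : ‖Complex.exp (-Complex.I * l)‖ = 1 := by
  rw [Complex.norm_exp]
  simp

lemma boundK (γ : ℝ) (hγ : 0 ≤ γ) (k : ℕ) (hk : 1 ≤ k) (l : ℝ) :
    invIntegrand (fun l' => psiK γ k (Complex.exp (-Complex.I * l'))) l ≤ (γ + 3/2)^2 := by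
  have h := quot_bound γ hγ _ _ (z_norm l) (psiK_sub_one γ hγ k hk l)
  exact pow_le_pow_left₀ (norm_nonneg _) h 2

lemma boundInf (γ : ℝ) (hγ : 0 ≤ γ) (l : ℝ) :
    invIntegrand (psiInfBdy γ) l ≤ (γ + 3/2)^2 := by
  have h := quot_bound γ hγ _ _ (z_norm l) (psiInf_sub_one γ hγ l)
  exact pow_le_pow_left₀ (norm_nonneg _) h 2

lemma measK (γ : ℝ) (k : ℕ) :
    Measurable (invIntegrand (fun l => psiK γ k (Complex.exp (-Complex.I * l)))) := by
  unfold invIntegrand psiK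
  fun_prop

lemma measInf (γ : ℝ) : Measurable (invIntegrand (psiInfBdy γ)) := by
  unfold invIntegrand psiInfBdy
  have htan : Measurable (fun l : ℝ => Real.tan (l / 2)) := by
    simp only [Real.tan_eq_sin_div_cos]
    fun_prop
  fun_prop

lemma int_of_bound {f : ℝ → ℝ} (hm : Measurable f) (C : ℝ) (h0 : ∀ l, 0 ≤ f l)
    (hb : ∀ l, f l ≤ C) : IntervalIntegrable f volume (-Real.pi) Real.pi := by
  rw [intervalIntegrable_iff]
  have hfin : volume (Set.uIoc (-Real.pi) Real.pi) < ⊤ := by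
    rw [Set.uIoc_of_le (by linarith [Real.pi_pos])]
    exact measure_Ioc_lt_top
  refine Integrable.mono' (integrableOn_const (C := C) hfin.ne)
    hm.aestronglyMeasurable (Filter.Eventually.of_forall fun x => ?_)
  rw [Real.norm_eq_abs, abs_of_nonneg (h0 x)]
  exact hb x

lemma nat_inv_tendsto : Filter.Tendsto (fun k : ℕ => 1 / (k : ℂ)) Filter.atTop (nhds 0) := by
  have h := tendsto_one_div_atTop_nhds_zero_nat (𝕜 := ℝ)
  have h2 := (Complex.continuous_ofReal.tendsto 0).comp h
  simp only [Function.comp_def, Complex.ofReal_zero] at h2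
  convert h2 using 2 with k
  push_cast
  ring

lemma psiInf_eq (γ : ℝ) (l : ℝ) (hcos : Real.cos (l/2) ≠ 0) :
    psiInfBdy γ l = ((1 + Complex.exp (-Complex.I * l)) / 2) *
      Complex.exp ((γ : ℂ) * (Complex.exp (-Complex.I * l) - 1) / (1 + Complex.exp (-Complex.I * l))) := by
  set z := Complex.exp (-Complex.I * l) with hzdef
  set c2 := Real.cos (l/2)
  set s2 := Real.sin (l/2)
  have hc : Real.cos l = 2 * c2^2 - 1 := by
    have := Real.cos_sq (l/2); rw [show 2*(l/2) = l by ring] at this; linarith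
  have hs : Real.sin l = 2 * s2 * c2 := by
    have := Real.sin_two_mul (l/2); rw [show 2*(l/2) = l by ring] at this; linarith
  have h1pz : (1 : ℂ) + z ≠ 0 := by
    rw [hzdef, zcoord]
    intro h0
    have hre := congrArg Complex.re h0
    simp only [Complex.add_re, Complex.one_re, Complex.sub_re, Complex.ofReal_re,
      Complex.mul_re, Complex.I_re, Complex.I_im, Complex.ofReal_im, Complex.zero_re] at hre
    have hc20 : c2^2 = 0 := by nlinarith [hre]
    exact hcos (by nlinarith [hc20])
  have key : (γ : ℂ) * (z - 1) / (1 + z) = -Complex.I * (γ : ℂ) * (Real.tan (l/2) : ℂ) := by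
    have hpy : (s2 : ℂ)^2 + (c2 : ℂ)^2 = 1 := by
      have := Real.sin_sq_add_cos_sq (l/2)
      exact_mod_cast congrArg (Complex.ofReal) this
    have hkey : (z - 1) * (c2 : ℂ) = -Complex.I * (s2 : ℂ) * (1 + z) := by
      rw [hzdef, zcoord, hc, hs]; push_cast
      linear_combination (-2*(c2:ℂ)*(s2:ℂ)^2) * Complex.I_sq + (2*(c2:ℂ)) * hpy
    have hc2 : (c2 : ℂ) ≠ 0 := Complex.ofReal_ne_zero.2 hcos
    have ht : (Real.tan (l/2) : ℂ) = (s2 : ℂ) / (c2 : ℂ) := by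
      rw [Real.tan_eq_sin_div_cos, Complex.ofReal_div]
    rw [ht]
    field_simp
    linear_combination (γ : ℂ) * hkey
  rw [psiInfBdy, key]

lemma tendsto_exponent (γ : ℝ) (z : ℂ) (h1pz : (1 : ℂ) + z ≠ 0) :
    Filter.Tendsto (fun k : ℕ => (γ : ℂ) * (z - 1) / (1 + z + 1 / (k : ℂ))) Filter.atTop
      (nhds ((γ : ℂ) * (z - 1) / (1 + z))) := by
  have hd : Filter.Tendsto (fun k : ℕ => (1 : ℂ) + z + 1 / (k : ℂ)) Filter.atTop (nhds (1 + z)) := by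
    have h2 := nat_inv_tendsto.const_add ((1:ℂ) + z)
    simpa using h2
  exact Filter.Tendsto.div tendsto_const_nhds hd h1pz

lemma tendsto_invIntegrand (γ : ℝ) (l : ℝ) (hl1 : -Real.pi < l) (hl2 : l < Real.pi) :
    Filter.Tendsto (fun k : ℕ => invIntegrand (fun l' => psiK γ k (Complex.exp (-Complex.I * l'))) l)
      Filter.atTop (nhds (invIntegrand (psiInfBdy γ) l)) := by
  have hcos : Real.cos (l/2) ≠ 0 := by
    have h := Real.cos_pos_of_mem_Ioo
      (show l/2 ∈ Set.Ioo (-(Real.pi/2)) (Real.pi/2) from ⟨by linarith, by linarith⟩)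
    exact h.ne'
  set z := Complex.exp (-Complex.I * l) with hzdef
  have h1pz : (1 : ℂ) + z ≠ 0 := by
    rw [← norm_ne_zero_iff, hzdef, norm_one_add_z]
    simp [hcos]
  have hexp := tendsto_exponent γ z h1pz
  have hψ : Filter.Tendsto (fun k : ℕ => psiK γ k z) Filter.atTop (nhds (psiInfBdy γ l)) := by
    rw [psiInf_eq γ l hcos]
    exact Filter.Tendsto.const_mul _ ((Complex.continuous_exp.tendsto _).comp hexp)
  unfold invIntegrand
  exact ((((Filter.Tendsto.const_mul z hψ).sub_const 1).div_const (1 - z)).norm.pow 2)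

/-- The retailer's inventory variance is continuous along the ε-optimal sequence:
`σ_I²(ψ^(k)) → σ_I²(ψ^∞)` as `k → ∞`, and both quantities are finite (the defining
integrands are integrable on `(−π, π)`). -/
theorem stmt_19 (γ : ℝ) (hγ : 0 < γ) :
    (∀ k : ℕ, 1 ≤ k → IntervalIntegrable
      (invIntegrand (fun l => psiK γ k (Complex.exp (-Complex.I * l)))) volume
      (-Real.pi) Real.pi) ∧
    IntervalIntegrable (invIntegrand (psiInfBdy γ)) volume (-Real.pi) Real.pi ∧
    Filter.Tendsto
      (fun k : ℕ => sigmaI2c (fun l => psiK γ k (Complex.exp (-Complex.I * l))))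
      Filter.atTop (nhds (sigmaI2c (psiInfBdy γ))) := by
  have inv_nonneg : ∀ (F : ℝ → ℂ) (l : ℝ), 0 ≤ invIntegrand F l :=
    fun F l => pow_nonneg (norm_nonneg _) 2
  refine ⟨fun k hk => int_of_bound (measK γ k) _ (inv_nonneg _) (boundK γ hγ.le k hk),
    int_of_bound (measInf γ) _ (inv_nonneg _) (boundInf γ hγ.le), ?_⟩
  unfold sigmaI2c
  apply Filter.Tendsto.const_mul
  apply intervalIntegral.tendsto_integral_filter_of_dominated_convergence
    (bound := fun _ => (γ + 3/2)^2)
  · exact Filter.Eventually.of_forall fun k => ((measK γ k).aestronglyMeasurable).restrict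
  · filter_upwards [Filter.eventually_ge_atTop 1] with k hk
    refine Filter.Eventually.of_forall fun x _ => ?_
    rw [Real.norm_eq_abs, abs_of_nonneg (inv_nonneg _ _)]
    exact boundK γ hγ.le k hk x
  · exact intervalIntegrable_const
  · have hπ : ∀ᵐ x : ℝ, x ∉ ({Real.pi} : Set ℝ) :=
      measure_eq_zero_iff_ae_notMem.mp (measure_singleton _)
    filter_upwards [hπ] with x hx hmem
    rw [Set.uIoc_of_le (by linarith [Real.pi_pos])] at hmem
    exact tendsto_invIntegrand γ x hmem.1
      (lt_of_le_of_ne hmem.2 (fun h => hx (by simp [h])))
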